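/- arXiv:1810.01920 — 4 statements merged into one kernel-verified Lean document; each statement's English description precedes it below -/
import Mathlib

section
/- Let f₁ and f₂ be λ-strongly convex functions on a convex compact set X with respective minimizers x₁*, x₂* ∈ X. If the difference h = f₁ - f₂ is κ'-Lipschitz on X, then ‖x₁* - x₂*‖ ≤ 2κ'/λ. (This is the key perturbation bound used to prove Lipschitzness of the inverse-optimization loss.) -/
open RealInnerProductSpace

theorem grad_lower_bound
    {n : ℕ} (X : Set (EuclideanSpace ℝ (Fin n))) (hXconvex : Convex ℝ X)
    (f : EuclideanSpace ℝ (Fin n) → ℝ) (f' : EuclideanSpace ℝ (Fin n) → EuclideanSpace ℝ (Fin n))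
    (hdiff : ∀ x, HasGradientAt f (f' x) x) (lam : ℝ)
    (hmono : ∀ x ∈ X, ∀ y ∈ X, lam * ‖x - y‖ ^ 2 ≤ ⟪f' y - f' x, y - x⟫)
    (x y : EuclideanSpace ℝ (Fin n)) (hx : x ∈ X) (hy : y ∈ X) :
    f x + ⟪f' x, y - x⟫ + lam / 2 * ‖y - x‖ ^ 2 ≤ f y := by
  set v := y - x with hv
  set g : ℝ → ℝ := fun t => f (x + t • v) - t * ⟪f' x, v⟫ - lam / 2 * t ^ 2 * ‖v‖ ^ 2 with hg
  have hc : ∀ t : ℝ, HasDerivAt (fun t : ℝ => x + t • v) v t := fun t =>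
    by simpa using ((hasDerivAt_id t).smul_const v).const_add x
  have hderiv : ∀ t : ℝ, HasDerivAt g (⟪f' (x + t • v), v⟫ - ⟪f' x, v⟫ - lam * t * ‖v‖ ^ 2) t := by
    intro t
    have h1 : HasDerivAt (fun t : ℝ => f (x + t • v)) ⟪f' (x + t • v), v⟫ t := by
      have := (hdiff (x + t • v)).hasFDerivAt.comp_hasDerivAt t (hc t)
      simp only [InnerProductSpace.toDual_apply_apply] at this
      exact this
    have h2 : HasDerivAt (fun t : ℝ => t * ⟪f' x, v⟫) ⟪f' x, v⟫ t := by
      simpa using (hasDerivAt_id t).mul_const ⟪f' x, v⟫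
    have h3 : HasDerivAt (fun t : ℝ => lam / 2 * t ^ 2 * ‖v‖ ^ 2) (lam * t * ‖v‖ ^ 2) t := by
      have := ((hasDerivAt_pow 2 t).const_mul (lam / 2)).mul_const (‖v‖ ^ 2)
      refine this.congr_deriv ?_
      push_cast
      ring
    exact (h1.sub h2).sub h3
  have hmem : ∀ t ∈ Set.Icc (0:ℝ) 1, x + t • v ∈ X := by
    intro t ht
    have := hXconvex hx hy (by linarith [ht.1, ht.2] : (0:ℝ) ≤ 1 - t) ht.1 (by linarith [ht.2])
    convert this using 1
    simp [hv]
    module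
  have hmono' : MonotoneOn g (Set.Icc (0:ℝ) 1) := by
    apply monotoneOn_of_deriv_nonneg (convex_Icc 0 1)
      (fun t _ => (hderiv t).continuousAt.continuousWithinAt)
      (fun t _ => (hderiv t).differentiableAt.differentiableWithinAt)
    intro t ht
    rw [interior_Icc] at ht
    rw [(hderiv t).deriv]
    have hz : x + t • v ∈ X := hmem t ⟨le_of_lt ht.1, le_of_lt ht.2⟩
    have := hmono x hx (x + t • v) hz
    have hnorm : ‖x - (x + t • v)‖ ^ 2 = t ^ 2 * ‖v‖ ^ 2 := by
      rw [show x - (x + t • v) = (-t) • v by module, norm_smul]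
      simp [mul_pow]
    have hinner : ⟪f' (x + t • v) - f' x, x + t • v - x⟫
        = t * (⟪f' (x + t • v), v⟫ - ⟪f' x, v⟫) := by
      rw [show x + t • v - x = t • v by module, inner_sub_left, real_inner_smul_right,
        real_inner_smul_right]
      ring
    rw [hnorm, hinner] at this
    nlinarith [ht.1]
  have h01 := hmono' (Set.left_mem_Icc.2 zero_le_one) (Set.right_mem_Icc.2 zero_le_one) zero_le_one
  simp only [hg] at h01
  have e0 : x + (0:ℝ) • v = x := by module
  have e1 : x + (1:ℝ) • v = y := by simp [hv]
  rw [e0, e1] at h01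
  linarith

/-- Perturbation bound: if `f₁, f₂` are λ-strongly convex on a convex compact set `X`
with minimizers `x₁*, x₂*`, and `h = f₁ - f₂` is κ'-Lipschitz on `X`, then
`‖x₁* - x₂*‖ ≤ 2κ'/λ`. -/
theorem strongly_convex_minimizer_perturbation
    {n : ℕ} (X : Set (EuclideanSpace ℝ (Fin n)))
    (hXconvex : Convex ℝ X) (hXcompact : IsCompact X)
    (f₁ f₂ : EuclideanSpace ℝ (Fin n) → ℝ)
    (f₁' f₂' : EuclideanSpace ℝ (Fin n) → EuclideanSpace ℝ (Fin n))
    (hdiff₁ : ∀ x, HasGradientAt f₁ (f₁' x) x)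
    (hdiff₂ : ∀ x, HasGradientAt f₂ (f₂' x) x)
    (lam : ℝ) (hlam : 0 < lam) (kappa' : ℝ) (hkappa' : 0 ≤ kappa')
    (hmono₁ : ∀ x ∈ X, ∀ y ∈ X, lam * ‖x - y‖ ^ 2 ≤ ⟪f₁' y - f₁' x, y - x⟫)
    (hmono₂ : ∀ x ∈ X, ∀ y ∈ X, lam * ‖x - y‖ ^ 2 ≤ ⟪f₂' y - f₂' x, y - x⟫)
    (x₁ x₂ : EuclideanSpace ℝ (Fin n)) (hx₁ : x₁ ∈ X) (hx₂ : x₂ ∈ X)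
    (hmin₁ : ∀ x ∈ X, f₁ x₁ ≤ f₁ x) (hmin₂ : ∀ x ∈ X, f₂ x₂ ≤ f₂ x)
    (hLip : ∀ x ∈ X, ∀ y ∈ X,
      |(f₁ x - f₂ x) - (f₁ y - f₂ y)| ≤ kappa' * ‖x - y‖) :
    ‖x₁ - x₂‖ ≤ 2 * kappa' / lam := by
  set m : EuclideanSpace ℝ (Fin n) := (1/2 : ℝ) • x₁ + (1/2 : ℝ) • x₂ with hm
  have hmX : m ∈ X := hXconvex hx₁ hx₂ (by norm_num) (by norm_num) (by norm_num)
  set d := ‖x₁ - x₂‖ with hd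
  have he1 : x₁ - m = (1/2 : ℝ) • (x₁ - x₂) := by rw [hm]; module
  have he2 : x₂ - m = (-(1/2) : ℝ) • (x₁ - x₂) := by rw [hm]; module
  have hn1 : ‖x₁ - m‖ ^ 2 = d ^ 2 / 4 := by
    rw [he1, norm_smul]; simp [mul_pow, ← hd]; ring
  have hn2 : ‖x₂ - m‖ ^ 2 = d ^ 2 / 4 := by
    rw [he2, norm_smul]; simp [mul_pow, ← hd]; ring
  have hcancel₁ : ⟪f₁' m, x₁ - m⟫ + ⟪f₁' m, x₂ - m⟫ = 0 := by
    rw [he1, he2, real_inner_smul_right, real_inner_smul_right]; ring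
  have hcancel₂ : ⟪f₂' m, x₁ - m⟫ + ⟪f₂' m, x₂ - m⟫ = 0 := by
    rw [he1, he2, real_inner_smul_right, real_inner_smul_right]; ring
  have h1a := grad_lower_bound X hXconvex f₁ f₁' hdiff₁ lam hmono₁ m x₁ hmX hx₁
  have h1b := grad_lower_bound X hXconvex f₁ f₁' hdiff₁ lam hmono₁ m x₂ hmX hx₂
  have h2a := grad_lower_bound X hXconvex f₂ f₂' hdiff₂ lam hmono₂ m x₂ hmX hx₂
  have h2b := grad_lower_bound X hXconvex f₂ f₂' hdiff₂ lam hmono₂ m x₁ hmX hx₁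
  rw [hn1] at h1a h2b
  rw [hn2] at h1b h2a
  have hgap₁ : f₁ x₁ + lam / 4 * d ^ 2 ≤ f₁ x₂ := by
    have := hmin₁ m hmX; linarith
  have hgap₂ : f₂ x₂ + lam / 4 * d ^ 2 ≤ f₂ x₁ := by
    have := hmin₂ m hmX; linarith
  have hL := hLip x₂ hx₂ x₁ hx₁
  rw [norm_sub_rev, ← hd] at hL
  have habs : (f₁ x₂ - f₂ x₂) - (f₁ x₁ - f₂ x₁) ≤ |(f₁ x₂ - f₂ x₂) - (f₁ x₁ - f₂ x₁)| :=
    le_abs_self _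
  have hkey : lam / 2 * d ^ 2 ≤ kappa' * d := by linarith
  rcases eq_or_lt_of_le (norm_nonneg (x₁ - x₂)) with h0 | h0
  · have hd0 : d = 0 := h0.symm
    rw [hd0]; positivity
  · have hd0 : (0:ℝ) < d := h0
    rw [le_div_iff₀ hlam]
    nlinarith [hkey, hd0]
end

section
/- Define the loss ℓ(y, θ) = ‖y - S(θ)‖² where S(θ) is the unique minimizer over X of the λ-strongly convex function f(·, θ). Suppose ‖x‖ ≤ B for all x ∈ X, ‖y‖ ≤ R, and the difference function h(x, θ₁, θ₂) = f(x, θ₁) - f(x, θ₂) satisfies |h(x,θ₁,θ₂) - h(x',θ₁,θ₂)| ≤ κ‖θ₁ - θ₂‖‖x - x'‖ for all x, x' ∈ X. Then |ℓ(y, θ₁) - ℓ(y, θ₂)| ≤ (4(B+R)κ/λ)‖θ₁ - θ₂‖ for all θ₁, θ₂ ∈ Θ. -/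
open RealInnerProductSpace

open Set Filter Topology in
/-- Strong-convexity lower bound at the minimizer. -/
theorem strong_min_lower_bound
    {n : ℕ} (X : Set (EuclideanSpace ℝ (Fin n))) (hXconvex : Convex ℝ X)
    (lam : ℝ)
    (g : EuclideanSpace ℝ (Fin n) → ℝ)
    (g' : EuclideanSpace ℝ (Fin n) → EuclideanSpace ℝ (Fin n))
    (hdiff : ∀ x, HasGradientAt g (g' x) x)
    (hmono : ∀ x ∈ X, ∀ y ∈ X, lam * ‖x - y‖ ^ 2 ≤ ⟪g' y - g' x, y - x⟫)
    (s : EuclideanSpace ℝ (Fin n)) (hs : s ∈ X)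
    (hmin : ∀ x ∈ X, g s ≤ g x)
    (x : EuclideanSpace ℝ (Fin n)) (hx : x ∈ X) :
    g s + lam / 2 * ‖x - s‖ ^ 2 ≤ g x := by
  set d : EuclideanSpace ℝ (Fin n) := x - s with hd
  -- membership of the segment
  have hmem : ∀ t ∈ Icc (0:ℝ) 1, s + t • d ∈ X := by
    intro t ht
    have h1 : s + t • d = (1 - t) • s + t • x := by
      simp only [hd, smul_sub, sub_smul, one_smul]
      abel
    rw [h1]
    exact hXconvex hs hx (by linarith [ht.2]) ht.1 (by ring)
  -- derivative of the restriction to the segment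
  have hderiv : ∀ t : ℝ, HasDerivAt (fun t : ℝ => g (s + t • d)) ⟪g' (s + t • d), d⟫ t := by
    intro t
    have hline : HasDerivAt (fun t : ℝ => s + t • d) d t := by
      simpa using ((hasDerivAt_id t).smul_const d).const_add s
    have := ((hdiff (s + t • d)).hasFDerivAt).comp_hasDerivAt t hline
    simp at this
    exact this
  -- φ'(0) ≥ 0 via slopes
  have hopt : (0:ℝ) ≤ ⟪g' (s + (0:ℝ) • d), d⟫ := by
    have h0 : (0:ℝ) ∉ Ioi (0:ℝ) := by simp
    have hslope := (hasDerivWithinAt_iff_tendsto_slope' h0).1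
      ((hderiv 0).hasDerivWithinAt (s := Ioi 0))
    refine ge_of_tendsto hslope ?_
    filter_upwards [Ioc_mem_nhdsGT (zero_lt_one)] with t ht
    rw [slope_def_field]
    apply div_nonneg
    · have := hmin _ (hmem t ⟨ht.1.le, ht.2⟩)
      simpa using (by simpa using sub_nonneg.2 this : (0:ℝ) ≤ g (s + t • d) - g (s + (0:ℝ) • d))
    · simpa using ht.1.le
  -- the shifted function ψ is monotone on [0,1]
  set ψ : ℝ → ℝ := fun t => g (s + t • d) - lam * ‖d‖ ^ 2 * (t ^ 2 / 2) with hψ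
  have hψderiv : ∀ t : ℝ, HasDerivAt ψ (⟪g' (s + t • d), d⟫ - lam * ‖d‖ ^ 2 * t) t := by
    intro t
    have h2 : HasDerivAt (fun t : ℝ => lam * ‖d‖ ^ 2 * (t ^ 2 / 2)) (lam * ‖d‖ ^ 2 * t) t := by
      have := (((hasDerivAt_pow 2 t).div_const 2).const_mul (lam * ‖d‖ ^ 2))
      rw [show lam * ‖d‖ ^ 2 * t = lam * ‖d‖ ^ 2 * (((2:ℕ):ℝ) * t ^ (2 - 1) / 2) by norm_num]
      exact this
    exact (hderiv t).sub h2
  have hψnonneg : ∀ t ∈ interior (Icc (0:ℝ) 1),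
      (0:ℝ) ≤ ⟪g' (s + t • d), d⟫ - lam * ‖d‖ ^ 2 * t := by
    rw [interior_Icc]
    intro t ht
    have h0mem := hmem 0 ⟨le_refl _, zero_le_one⟩
    have htmem := hmem t ⟨ht.1.le, ht.2.le⟩
    have hm := hmono _ h0mem _ htmem
    have heq : (s + t • d) - (s + (0:ℝ) • d) = t • d := by
      simp
    rw [heq] at hm
    have hnorm : ‖(s + (0:ℝ) • d) - (s + t • d)‖ ^ 2 = t ^ 2 * ‖d‖ ^ 2 := by
      have : (s + (0:ℝ) • d) - (s + t • d) = (-t) • d := by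
        simp [neg_smul]
      rw [this, norm_smul]
      simp [mul_pow]
    rw [hnorm, inner_sub_left, inner_smul_right, inner_smul_right] at hm
    -- hm : lam * (t^2 * ‖d‖^2) ≤ t * ⟪g' (s+t•d), d⟫ - t * ⟪g' (s+0•d), d⟫
    have ht0 := ht.1
    nlinarith [hopt, hm]
  have hcont : ContinuousOn ψ (Icc (0:ℝ) 1) :=
    fun t _ => ((hψderiv t).continuousAt).continuousWithinAt
  have hmonoψ : MonotoneOn ψ (Icc (0:ℝ) 1) := by
    refine monotoneOn_of_hasDerivWithinAt_nonneg (convex_Icc 0 1) hcont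
      (fun t ht => ((hψderiv t).hasDerivWithinAt)) hψnonneg
  have h01 := hmonoψ (left_mem_Icc.2 zero_le_one) (right_mem_Icc.2 zero_le_one) zero_le_one
  simp only [hψ] at h01
  have hx1 : s + (1:ℝ) • d = x := by simp [hd]
  have hx0 : s + (0:ℝ) • d = s := by simp
  rw [hx0, hx1] at h01
  nlinarith [h01]

/-- Lipschitz continuity of the inverse-optimization loss `ℓ(y, θ) = ‖y - S(θ)‖²`
in the parameter `θ`, with modulus `4(B+R)κ/λ`. -/
theorem loss_lipschitz_in_parameter
    {n p : ℕ} (Θ : Set (EuclideanSpace ℝ (Fin p)))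
    (X : Set (EuclideanSpace ℝ (Fin n)))
    (hXconvex : Convex ℝ X) (hXcompact : IsCompact X)
    (B R lam kappa : ℝ) (hB : 0 ≤ B) (hR : 0 ≤ R) (hlam : 0 < lam) (hkappa : 0 < kappa)
    (hXbound : ∀ x ∈ X, ‖x‖ ≤ B)
    (f : EuclideanSpace ℝ (Fin n) → EuclideanSpace ℝ (Fin p) → ℝ)
    (f' : EuclideanSpace ℝ (Fin p) → EuclideanSpace ℝ (Fin n) → EuclideanSpace ℝ (Fin n))
    (hdiff : ∀ θ ∈ Θ, ∀ x, HasGradientAt (fun z => f z θ) (f' θ x) x)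
    (hmono : ∀ θ ∈ Θ, ∀ x ∈ X, ∀ y ∈ X,
      lam * ‖x - y‖ ^ 2 ≤ ⟪f' θ y - f' θ x, y - x⟫)
    (S : EuclideanSpace ℝ (Fin p) → EuclideanSpace ℝ (Fin n))
    (hSmem : ∀ θ ∈ Θ, S θ ∈ X)
    (hSmin : ∀ θ ∈ Θ, ∀ x ∈ X, f (S θ) θ ≤ f x θ)
    (hSunique : ∀ θ ∈ Θ, ∀ x ∈ X, (∀ z ∈ X, f x θ ≤ f z θ) → x = S θ)
    (hdiffLip : ∀ θ₁ ∈ Θ, ∀ θ₂ ∈ Θ, ∀ x ∈ X, ∀ x' ∈ X,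
      |(f x θ₁ - f x θ₂) - (f x' θ₁ - f x' θ₂)| ≤ kappa * ‖θ₁ - θ₂‖ * ‖x - x'‖)
    (y : EuclideanSpace ℝ (Fin n)) (hy : ‖y‖ ≤ R) :
    ∀ θ₁ ∈ Θ, ∀ θ₂ ∈ Θ,
      |‖y - S θ₁‖ ^ 2 - ‖y - S θ₂‖ ^ 2| ≤ 4 * (B + R) * kappa / lam * ‖θ₁ - θ₂‖ := by
  intro θ₁ hθ₁ θ₂ hθ₂
  set s₁ := S θ₁
  set s₂ := S θ₂
  have hs₁ := hSmem θ₁ hθ₁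
  have hs₂ := hSmem θ₂ hθ₂
  have h1 : f s₁ θ₁ + lam / 2 * ‖s₂ - s₁‖ ^ 2 ≤ f s₂ θ₁ :=
    strong_min_lower_bound X hXconvex lam (fun z => f z θ₁) (f' θ₁)
      (hdiff θ₁ hθ₁) (hmono θ₁ hθ₁) s₁ hs₁ (hSmin θ₁ hθ₁) s₂ hs₂
  have h2 : f s₂ θ₂ + lam / 2 * ‖s₁ - s₂‖ ^ 2 ≤ f s₁ θ₂ :=
    strong_min_lower_bound X hXconvex lam (fun z => f z θ₂) (f' θ₂)
      (hdiff θ₂ hθ₂) (hmono θ₂ hθ₂) s₂ hs₂ (hSmin θ₂ hθ₂) s₁ hs₁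
  have hlip := hdiffLip θ₁ hθ₁ θ₂ hθ₂ s₂ hs₂ s₁ hs₁
  have hrev : ‖s₂ - s₁‖ = ‖s₁ - s₂‖ := norm_sub_rev _ _
  have hDkey : lam * ‖s₁ - s₂‖ ^ 2 ≤ kappa * ‖θ₁ - θ₂‖ * ‖s₁ - s₂‖ := by
    rw [hrev] at hlip h1
    have habs := abs_le.1 hlip
    nlinarith [habs.1, habs.2, h1, h2]
  set D := ‖s₁ - s₂‖ with hDdef
  have hD0 : 0 ≤ D := norm_nonneg _
  have hT0 : 0 ≤ ‖θ₁ - θ₂‖ := norm_nonneg _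
  have ha : ‖y - s₁‖ ≤ B + R := by
    calc ‖y - s₁‖ ≤ ‖y‖ + ‖s₁‖ := norm_sub_le _ _
    _ ≤ B + R := by have := hXbound s₁ hs₁; linarith
  have hb : ‖y - s₂‖ ≤ B + R := by
    calc ‖y - s₂‖ ≤ ‖y‖ + ‖s₂‖ := norm_sub_le _ _
    _ ≤ B + R := by have := hXbound s₂ hs₂; linarith
  have hdiffnorm : |‖y - s₁‖ - ‖y - s₂‖| ≤ D := by
    have := abs_norm_sub_norm_le (y - s₁) (y - s₂)
    have heq : (y - s₁) - (y - s₂) = s₂ - s₁ := by abel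
    rw [heq] at this
    exact le_of_le_of_eq this hrev
  have hsq : |‖y - s₁‖ ^ 2 - ‖y - s₂‖ ^ 2| ≤ 2 * (B + R) * D := by
    have h : ‖y - s₁‖ ^ 2 - ‖y - s₂‖ ^ 2
        = (‖y - s₁‖ - ‖y - s₂‖) * (‖y - s₁‖ + ‖y - s₂‖) := by ring
    rw [h, abs_mul]
    have hsum : |‖y - s₁‖ + ‖y - s₂‖| ≤ 2 * (B + R) := by
      rw [abs_of_nonneg (by positivity)]; linarith
    calc |‖y - s₁‖ - ‖y - s₂‖| * |‖y - s₁‖ + ‖y - s₂‖|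
        ≤ D * (2 * (B + R)) :=
          mul_le_mul hdiffnorm hsum (abs_nonneg _) hD0
      _ = 2 * (B + R) * D := by ring
  rcases eq_or_lt_of_le hD0 with hD | hD
  · have : s₁ = s₂ := by
      rw [← sub_eq_zero]; exact norm_eq_zero.1 (by rw [← hDdef, ← hD])
    rw [this]
    simp only [sub_self, abs_zero]
    positivity
  · have hDle : D ≤ kappa * ‖θ₁ - θ₂‖ / lam := by
      rw [le_div_iff₀ hlam]
      nlinarith [hDkey]
    calc |‖y - s₁‖ ^ 2 - ‖y - s₂‖ ^ 2| ≤ 2 * (B + R) * D := hsq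
      _ ≤ 2 * (B + R) * (kappa * ‖θ₁ - θ₂‖ / lam) := by
          apply mul_le_mul_of_nonneg_left hDle (by positivity)
      _ ≤ 4 * (B + R) * kappa / lam * ‖θ₁ - θ₂‖ := by
          have key : 2 * (B + R) * (kappa * ‖θ₁ - θ₂‖ / lam)
              = (2 * (B + R) * kappa * ‖θ₁ - θ₂‖) / lam := by ring
          have key2 : 4 * (B + R) * kappa / lam * ‖θ₁ - θ₂‖
              = (4 * (B + R) * kappa * ‖θ₁ - θ₂‖) / lam := by ring
          rw [key, key2, div_le_div_iff_of_pos_right hlam]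
          nlinarith [mul_nonneg (mul_nonneg (add_nonneg hB hR) hkappa.le) hT0]
  done
end

section
/- Under the assumptions above, the map θ ↦ S(θ) (the unique minimizer of the λ-strongly convex objective f(·, θ) over X) is (2κ/λ)-Lipschitz in θ: ‖S(θ₁) - S(θ₂)‖ ≤ (2κ/λ)‖θ₁ - θ₂‖. -/
open RealInnerProductSpace

open Set Filter Topology in
private lemma slope_bound_aux {φ : ℝ → ℝ} {d C : ℝ} (hφ : HasDerivAt φ d 0)
    (h : ∀ t ∈ Set.Ioc (0:ℝ) 1, φ t - φ 0 ≤ C * t) : d ≤ C := by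
  have h1 : Tendsto (slope φ 0) (𝓝[≠] 0) (𝓝 d) := hasDerivAt_iff_tendsto_slope.mp hφ
  have h2 : Tendsto (slope φ 0) (𝓝[>] 0) (𝓝 d) :=
    h1.mono_left (nhdsWithin_mono _ (fun x hx => ne_of_gt hx))
  refine le_of_tendsto h2 ?_
  filter_upwards [Ioc_mem_nhdsGT (zero_lt_one)] with t ht
  have ht0 : (0:ℝ) < t := ht.1
  have := h t ht
  rw [slope_def_field, div_le_iff₀ (by simpa using ht0)]
  simpa using this.trans (by ring_nf; simp)

open Set Filter Topology in
private lemma line_hasDerivAt {n : ℕ} (g : EuclideanSpace ℝ (Fin n) → ℝ)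
    (g' : EuclideanSpace ℝ (Fin n) → EuclideanSpace ℝ (Fin n))
    (hg : ∀ z, HasGradientAt g (g' z) z)
    (x v : EuclideanSpace ℝ (Fin n)) (t : ℝ) :
    HasDerivAt (fun s : ℝ => g (x + s • v)) ⟪g' (x + t • v), v⟫ t := by
  have hline : HasDerivAt (fun s : ℝ => x + s • v) v t := by
    simpa using ((hasDerivAt_id t).smul_const v).const_add x
  have := (hg (x + t • v)).hasFDerivAt.comp_hasDerivAt t hline
  exact this

/-- The minimizer map `θ ↦ S(θ)` of a λ-strongly convex objective over a convex
compact set `X` is `(2κ/λ)`-Lipschitz in `θ`. -/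
theorem minimizer_map_lipschitz
    {n p : ℕ} (Θ : Set (EuclideanSpace ℝ (Fin p)))
    (X : Set (EuclideanSpace ℝ (Fin n)))
    (hXconvex : Convex ℝ X) (hXcompact : IsCompact X)
    (lam kappa : ℝ) (hlam : 0 < lam) (hkappa : 0 < kappa)
    (f : EuclideanSpace ℝ (Fin n) → EuclideanSpace ℝ (Fin p) → ℝ)
    (f' : EuclideanSpace ℝ (Fin p) → EuclideanSpace ℝ (Fin n) → EuclideanSpace ℝ (Fin n))
    (hdiff : ∀ θ ∈ Θ, ∀ x, HasGradientAt (fun z => f z θ) (f' θ x) x)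
    (hmono : ∀ θ ∈ Θ, ∀ x ∈ X, ∀ y ∈ X,
      lam * ‖x - y‖ ^ 2 ≤ ⟪f' θ y - f' θ x, y - x⟫)
    (S : EuclideanSpace ℝ (Fin p) → EuclideanSpace ℝ (Fin n))
    (hSmem : ∀ θ ∈ Θ, S θ ∈ X)
    (hSmin : ∀ θ ∈ Θ, ∀ x ∈ X, f (S θ) θ ≤ f x θ)
    (hdiffLip : ∀ θ₁ ∈ Θ, ∀ θ₂ ∈ Θ, ∀ x ∈ X, ∀ x' ∈ X,
      |(f x θ₁ - f x θ₂) - (f x' θ₁ - f x' θ₂)| ≤ kappa * ‖θ₁ - θ₂‖ * ‖x - x'‖) :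
    ∀ θ₁ ∈ Θ, ∀ θ₂ ∈ Θ, ‖S θ₁ - S θ₂‖ ≤ 2 * kappa / lam * ‖θ₁ - θ₂‖ := by
  -- membership of segment points
  have hseg : ∀ x ∈ X, ∀ y ∈ X, ∀ t ∈ Set.Icc (0:ℝ) 1, x + t • (y - x) ∈ X := by
    intro x hx y hy t ht
    have := hXconvex hx hy (a := 1 - t) (b := t) (by linarith [ht.2]) ht.1 (by ring)
    convert this using 1
    module
  -- variational inequality at the minimizer
  have VI : ∀ θ ∈ Θ, ∀ x ∈ X, 0 ≤ ⟪f' θ (S θ), x - S θ⟫ := by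
    intro θ hθ x hx
    set y := S θ with hy
    have hder : HasDerivAt (fun s : ℝ => -(f (y + s • (x - y)) θ))
        (-⟪f' θ (y + (0:ℝ) • (x - y)), x - y⟫) 0 :=
      (line_hasDerivAt (fun z => f z θ) (f' θ) (hdiff θ hθ) y (x - y) 0).neg
    have hb : ∀ t ∈ Set.Ioc (0:ℝ) 1,
        (fun s : ℝ => -(f (y + s • (x - y)) θ)) t
          - (fun s : ℝ => -(f (y + s • (x - y)) θ)) 0 ≤ 0 * t := by
      intro t ht
      have hmem : y + t • (x - y) ∈ X := hseg y (hSmem θ hθ) x hx t ⟨le_of_lt ht.1, ht.2⟩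
      have h0 : f (y + (0:ℝ) • (x - y)) θ ≤ f (y + t • (x - y)) θ := by
        simpa using hSmin θ hθ _ hmem
      simp only [zero_mul]
      linarith
    have := slope_bound_aux hder hb
    have h0 : ⟪f' θ (y + (0:ℝ) • (x - y)), x - y⟫ ≥ 0 := by linarith
    simpa using h0
  -- directional bound on the gradient difference
  have DB : ∀ θ₁ ∈ Θ, ∀ θ₂ ∈ Θ, ∀ x ∈ X, ∀ y ∈ X,
      ⟪f' θ₁ x - f' θ₂ x, y - x⟫ ≤ kappa * ‖θ₁ - θ₂‖ * ‖y - x‖ := by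
    intro θ₁ hθ₁ θ₂ hθ₂ x hx y hy
    have hder : HasDerivAt
        (fun s : ℝ => f (x + s • (y - x)) θ₁ - f (x + s • (y - x)) θ₂)
        (⟪f' θ₁ (x + (0:ℝ) • (y - x)), y - x⟫ - ⟪f' θ₂ (x + (0:ℝ) • (y - x)), y - x⟫) 0 :=
      (line_hasDerivAt (fun z => f z θ₁) (f' θ₁) (hdiff θ₁ hθ₁) x (y - x) 0).sub
        (line_hasDerivAt (fun z => f z θ₂) (f' θ₂) (hdiff θ₂ hθ₂) x (y - x) 0)
    have hb : ∀ t ∈ Set.Ioc (0:ℝ) 1,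
        (f (x + t • (y - x)) θ₁ - f (x + t • (y - x)) θ₂)
          - (f (x + (0:ℝ) • (y - x)) θ₁ - f (x + (0:ℝ) • (y - x)) θ₂)
          ≤ (kappa * ‖θ₁ - θ₂‖ * ‖y - x‖) * t := by
      intro t ht
      have hmem : x + t • (y - x) ∈ X := hseg x hx y hy t ⟨le_of_lt ht.1, ht.2⟩
      have hmem0 : x + (0:ℝ) • (y - x) ∈ X := by simpa using hx
      have := hdiffLip θ₁ hθ₁ θ₂ hθ₂ _ hmem _ hmem0
      have hnorm : ‖(x + t • (y - x)) - (x + (0:ℝ) • (y - x))‖ = t * ‖y - x‖ := by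
        have : (x + t • (y - x)) - (x + (0:ℝ) • (y - x)) = t • (y - x) := by module
        rw [this, norm_smul, Real.norm_eq_abs, abs_of_pos ht.1]
      calc (f (x + t • (y - x)) θ₁ - f (x + t • (y - x)) θ₂)
            - (f (x + (0:ℝ) • (y - x)) θ₁ - f (x + (0:ℝ) • (y - x)) θ₂)
          ≤ |(f (x + t • (y - x)) θ₁ - f (x + t • (y - x)) θ₂)
            - (f (x + (0:ℝ) • (y - x)) θ₁ - f (x + (0:ℝ) • (y - x)) θ₂)| := le_abs_self _
        _ ≤ kappa * ‖θ₁ - θ₂‖ * ‖(x + t • (y - x)) - (x + (0:ℝ) • (y - x))‖ := this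
        _ = (kappa * ‖θ₁ - θ₂‖ * ‖y - x‖) * t := by rw [hnorm]; ring
    have := slope_bound_aux hder hb
    have h0 : x + (0:ℝ) • (y - x) = x := by module
    rw [h0] at this
    rw [← inner_sub_left] at this
    exact this
  intro θ₁ hθ₁ θ₂ hθ₂
  set x := S θ₁ with hx
  set y := S θ₂ with hy
  have hxX := hSmem θ₁ hθ₁
  have hyX := hSmem θ₂ hθ₂
  set D := ‖x - y‖ with hD
  have hmain : lam * D ^ 2 ≤ kappa * ‖θ₂ - θ₁‖ * D := by
    have h1 : lam * ‖x - y‖ ^ 2 ≤ ⟪f' θ₁ y - f' θ₁ x, y - x⟫ :=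
      hmono θ₁ hθ₁ x hxX y hyX
    have h2 : 0 ≤ ⟪f' θ₁ x, y - x⟫ := VI θ₁ hθ₁ y hyX
    have h3 : 0 ≤ ⟪f' θ₂ y, x - y⟫ := VI θ₂ hθ₂ x hxX
    have h4 : ⟪f' θ₂ y - f' θ₁ y, x - y⟫ ≤ kappa * ‖θ₂ - θ₁‖ * ‖x - y‖ :=
      DB θ₂ hθ₂ θ₁ hθ₁ y hyX x hxX
    have hxy : (x - y : EuclideanSpace ℝ (Fin n)) = -(y - x) := by module
    have s1 : ⟪f' θ₂ y - f' θ₁ y, x - y⟫ = -⟪f' θ₂ y - f' θ₁ y, y - x⟫ := by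
      rw [hxy, inner_neg_right]
    have s3 : ⟪f' θ₂ y, x - y⟫ = -⟪f' θ₂ y, y - x⟫ := by
      rw [hxy, inner_neg_right]
    have exp1 : ⟪f' θ₁ y - f' θ₁ x, y - x⟫ = ⟪f' θ₁ y, y - x⟫ - ⟪f' θ₁ x, y - x⟫ :=
      inner_sub_left _ _ _
    have exp2 : ⟪f' θ₂ y - f' θ₁ y, y - x⟫ = ⟪f' θ₂ y, y - x⟫ - ⟪f' θ₁ y, y - x⟫ :=
      inner_sub_left _ _ _
    have hDnorm : D = ‖x - y‖ := hD
    linarith [h1, h2, h3, h4, s1, s3, exp1, exp2]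
  have hDnn : 0 ≤ D := norm_nonneg _
  have hθn : ‖θ₂ - θ₁‖ = ‖θ₁ - θ₂‖ := by rw [← norm_neg]; congr 1; module
  rcases eq_or_lt_of_le hDnn with h0 | hpos
  · rw [← h0]
    positivity
  · have : lam * D ≤ kappa * ‖θ₁ - θ₂‖ := by
      rw [hθn] at hmain
      nlinarith [hmain, hpos]
    rw [div_mul_eq_mul_div, le_div_iff₀ hlam]
    nlinarith [this, norm_nonneg (θ₁ - θ₂), hkappa.le]
end

section
/- Consider online convex optimization with convex L-Lipschitz losses g_t : Θ → ℝ on a convex compact set Θ of diameter at most D (‖θ - θ'‖ ≤ D for all θ, θ' ∈ Θ), using implicit (proximal) updates θ_{t+1} = argmin_{θ∈Θ}(½‖θ-θ_t‖² + η_t g_t(θ)) with step sizes η_t = (D/(2L))·(1/√t). Then the regret satisfies Σ_{t=1}^T g_t(θ_t) - min_{θ∈Θ} Σ_{t=1}^T g_t(θ) ≤ 2DL√T. -/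
open RealInnerProductSpace

lemma sum_inv_sqrt_le (T : ℕ) :
    ∑ t ∈ Finset.Icc 1 T, 1 / Real.sqrt t ≤ 2 * Real.sqrt T := by
  induction T with
  | zero => simp
  | succ T ih =>
    rw [Finset.sum_Icc_succ_top (by omega : 1 ≤ T + 1)]
    have h1 : Real.sqrt (T + 1) > 0 := Real.sqrt_pos.mpr (by positivity)
    have key : 1 / Real.sqrt ((T : ℕ) + 1 : ℕ) ≤ 2 * Real.sqrt ((T : ℕ) + 1 : ℕ) - 2 * Real.sqrt T := by
      push_cast
      rw [div_le_iff₀ h1]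
      nlinarith [sq_nonneg (Real.sqrt ((T:ℝ) + 1) - Real.sqrt T),
        Real.sq_sqrt (by positivity : (0:ℝ) ≤ (T:ℝ)),
        Real.sq_sqrt (by positivity : (0:ℝ) ≤ (T:ℝ) + 1),
        Real.sqrt_nonneg (T:ℝ)]
    linarith

lemma abel_bound (a b : ℕ → ℝ) (C : ℝ) (ha0 : ∀ t, 0 ≤ a t) (haC : ∀ t, a t ≤ C)
    (hb0 : ∀ t, 0 ≤ b t) (hbmono : ∀ t, b t ≤ b (t + 1)) :
    ∀ T, 1 ≤ T → ∑ t ∈ Finset.Icc 1 T, b t * (a t - a (t + 1)) ≤ b T * C - b T * a (T + 1) := by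
  intro T
  induction T with
  | zero => omega
  | succ T ih =>
    intro _
    rcases Nat.eq_or_lt_of_le (show 1 ≤ T + 1 by omega) with h | h
    · rw [← h]
      simp only [Finset.Icc_self, Finset.sum_singleton]
      nlinarith [haC 1, hb0 1]
    · have hT : 1 ≤ T := by omega
      rw [Finset.sum_Icc_succ_top (by omega : 1 ≤ T + 1)]
      have := ih hT
      nlinarith [hbmono T, haC (T + 1), ha0 (T + 2), hb0 (T + 1), hb0 T, ha0 (T + 1)]

lemma norm_combo {p : ℕ} (x y : EuclideanSpace ℝ (Fin p)) (s : ℝ) :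
    ‖(1 - s) • x + s • y‖ ^ 2 =
      (1 - s) * ‖x‖ ^ 2 + s * ‖y‖ ^ 2 - s * (1 - s) * ‖x - y‖ ^ 2 := by
  rw [← real_inner_self_eq_norm_sq, ← real_inner_self_eq_norm_sq,
    ← real_inner_self_eq_norm_sq, ← real_inner_self_eq_norm_sq]
  simp only [inner_add_left, inner_add_right, inner_sub_left, inner_sub_right,
    real_inner_smul_left, real_inner_smul_right]
  rw [real_inner_comm y x]
  ring

/-- strong optimality of a 1-strongly-convex minimizer over a convex set -/
lemma strong_opt {p : ℕ} (Θ : Set (EuclideanSpace ℝ (Fin p))) (hconvex : Convex ℝ Θ)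
    (G : EuclideanSpace ℝ (Fin p) → ℝ) (hG : ConvexOn ℝ Set.univ G)
    (η : ℝ) (hη : 0 ≤ η)
    (c u v : EuclideanSpace ℝ (Fin p)) (hu : u ∈ Θ) (hv : v ∈ Θ)
    (hmin : ∀ θ' ∈ Θ, (1:ℝ)/2 * ‖u - c‖ ^ 2 + η * G u ≤ (1:ℝ)/2 * ‖θ' - c‖ ^ 2 + η * G θ') :
    (1:ℝ)/2 * ‖u - c‖ ^ 2 + η * G u + (1:ℝ)/2 * ‖v - u‖ ^ 2 ≤
      (1:ℝ)/2 * ‖v - c‖ ^ 2 + η * G v := by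
  apply le_of_forall_pos_le_add
  intro ε hε
  set Q : ℝ := (1:ℝ)/2 * ‖v - u‖ ^ 2 with hQdef
  have hQ0 : 0 ≤ Q := by positivity
  set s : ℝ := min 1 (ε / (Q + 1)) with hsdef
  have hs0 : 0 < s := lt_min one_pos (by positivity)
  have hs1 : s ≤ 1 := min_le_left _ _
  set w : EuclideanSpace ℝ (Fin p) := (1 - s) • u + s • v with hwdef
  have hw : w ∈ Θ := hconvex hu hv (by linarith) (le_of_lt hs0) (by ring)
  have hGw : G w ≤ (1 - s) * G u + s * G v :=
    hG.2 (Set.mem_univ u) (Set.mem_univ v) (by linarith) (le_of_lt hs0) (by ring)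
  have hwc : w - c = (1 - s) • (u - c) + s • (v - c) := by
    rw [hwdef]; module
  have hnorm : ‖w - c‖ ^ 2 = (1 - s) * ‖u - c‖ ^ 2 + s * ‖v - c‖ ^ 2
      - s * (1 - s) * ‖v - u‖ ^ 2 := by
    rw [hwc, norm_combo]
    have : (u - c) - (v - c) = u - v := by module
    rw [this, norm_sub_rev u v]
  have hmw := hmin w hw
  have hηGw : η * G w ≤ η * ((1 - s) * G u + s * G v) :=
    mul_le_mul_of_nonneg_left hGw hη
  have hkey : (1:ℝ)/2 * ‖u - c‖ ^ 2 + η * G u + (1 - s) * Q ≤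
      (1:ℝ)/2 * ‖v - c‖ ^ 2 + η * G v := by
    rw [hQdef]
    have h := hmw
    rw [hnorm] at h
    have h2 : s * ((1:ℝ)/2 * ‖u - c‖ ^ 2 + η * G u) + s * ((1 - s) * ((1:ℝ)/2 * ‖v - u‖ ^ 2)) ≤
        s * ((1:ℝ)/2 * ‖v - c‖ ^ 2 + η * G v) := by nlinarith
    have := (mul_le_mul_iff_right₀ hs0).mp
      (by linarith [h2] : s * ((1:ℝ)/2 * ‖u - c‖ ^ 2 + η * G u + (1 - s) * ((1:ℝ)/2 * ‖v - u‖ ^ 2))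
        ≤ s * ((1:ℝ)/2 * ‖v - c‖ ^ 2 + η * G v))
    linarith
  have hsQ : s * Q ≤ ε := by
    calc s * Q ≤ (ε / (Q + 1)) * Q :=
          mul_le_mul_of_nonneg_right (min_le_right _ _) hQ0
    _ ≤ (ε / (Q + 1)) * (Q + 1) := by
          apply mul_le_mul_of_nonneg_left (by linarith) (by positivity)
    _ = ε := by field_simp
  linarith

/-- Regret bound for online convex optimization with implicit (proximal) updates:
with convex `L`-Lipschitz losses on a convex compact set of diameter at most `D`, and
step sizes `η_t = D/(2L√t)`, the regret after `T` rounds is at most `2DL√T`. -/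
theorem implicit_online_learning_regret
    {p : ℕ} (Θ : Set (EuclideanSpace ℝ (Fin p)))
    (hne : Θ.Nonempty) (hconvex : Convex ℝ Θ) (hcompact : IsCompact Θ)
    (D L : ℝ) (hD : 0 < D) (hL : 0 < L)
    (hdiam : ∀ θ ∈ Θ, ∀ θ' ∈ Θ, ‖θ - θ'‖ ≤ D)
    (g : ℕ → EuclideanSpace ℝ (Fin p) → ℝ)
    (hgconv : ∀ t, ConvexOn ℝ Set.univ (g t))
    (hgLip : ∀ t, ∀ θ₁ θ₂ : EuclideanSpace ℝ (Fin p), |g t θ₁ - g t θ₂| ≤ L * ‖θ₁ - θ₂‖)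
    (θ : ℕ → EuclideanSpace ℝ (Fin p)) (hθmem : ∀ t, θ t ∈ Θ)
    (hupdate : ∀ t ≥ 1, ∀ θ' ∈ Θ,
      (1 : ℝ) / 2 * ‖θ (t + 1) - θ t‖ ^ 2 + D / (2 * L * Real.sqrt t) * g t (θ (t + 1)) ≤
        (1 : ℝ) / 2 * ‖θ' - θ t‖ ^ 2 + D / (2 * L * Real.sqrt t) * g t θ')
    (T : ℕ) (hT : 1 ≤ T) :
    ∀ θstar ∈ Θ,
      ∑ t ∈ Finset.Icc 1 T, g t (θ t) - ∑ t ∈ Finset.Icc 1 T, g t θstar ≤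
        2 * D * L * Real.sqrt T := by
  intro θstar hθs
  set a : ℕ → ℝ := fun t => ‖θstar - θ t‖ ^ 2 with hadef
  -- per-step bound
  have hstep : ∀ t : ℕ, 1 ≤ t →
      g t (θ t) - g t θstar ≤
        L / D * Real.sqrt t * (a t - a (t + 1)) + D * L / (4 * Real.sqrt t) := by
    intro t ht
    have ht1 : (1 : ℝ) ≤ (t : ℝ) := by exact_mod_cast ht
    have hst : 0 < Real.sqrt t := Real.sqrt_pos.mpr (by linarith)
    set η : ℝ := D / (2 * L * Real.sqrt t) with hηdef
    have hη : 0 < η := by rw [hηdef]; positivity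
    have strong := strong_opt Θ hconvex (g t) (hgconv t) η hη.le
      (θ t) (θ (t + 1)) θstar (hθmem (t + 1)) hθs
      (fun θ' hθ' => hupdate t ht θ' hθ')
    have hlip : g t (θ t) - g t (θ (t + 1)) ≤ L * ‖θ (t + 1) - θ t‖ := by
      have := le_trans (le_abs_self _) (hgLip t (θ t) (θ (t + 1)))
      rwa [norm_sub_rev] at this
    have hlip2 : η * (g t (θ t) - g t (θ (t + 1))) ≤ η * (L * ‖θ (t + 1) - θ t‖) :=
      mul_le_mul_of_nonneg_left hlip hη.le
    have hsum : η * (g t (θ t) - g t θstar) ≤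
        1 / 2 * (a t - a (t + 1)) + η ^ 2 * L ^ 2 / 2 := by
      have hsq := sq_nonneg (‖θ (t + 1) - θ t‖ - η * L)
      simp only [hadef]
      nlinarith [strong, hlip2]
    have hRB : 1 / 2 * (a t - a (t + 1)) + η ^ 2 * L ^ 2 / 2 =
        η * (L / D * Real.sqrt t * (a t - a (t + 1)) + D * L / (4 * Real.sqrt t)) := by
      rw [hηdef]
      have h1 : Real.sqrt (t:ℝ) ≠ 0 := ne_of_gt hst
      have h2 : Real.sqrt (t:ℝ) * Real.sqrt (t:ℝ) = (t:ℝ) :=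
        Real.mul_self_sqrt (by linarith)
      field_simp
      nlinarith [h2]
    rw [hRB] at hsum
    exact (mul_le_mul_iff_right₀ hη).mp hsum
  -- sum bound
  rw [← Finset.sum_sub_distrib]
  have h1 : ∑ t ∈ Finset.Icc 1 T, (g t (θ t) - g t θstar) ≤
      ∑ t ∈ Finset.Icc 1 T,
        (L / D * Real.sqrt t * (a t - a (t + 1)) + D * L / (4 * Real.sqrt t)) :=
    Finset.sum_le_sum fun t ht => hstep t (Finset.mem_Icc.mp ht).1
  rw [Finset.sum_add_distrib] at h1
  -- first sum via abel_bound
  have hA : ∑ t ∈ Finset.Icc 1 T, L / D * Real.sqrt t * (a t - a (t + 1)) ≤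
      L / D * Real.sqrt T * D ^ 2 - L / D * Real.sqrt T * a (T + 1) := by
    apply abel_bound a (fun t => L / D * Real.sqrt t) (D ^ 2)
    · intro t; positivity
    · intro t
      have := hdiam θstar hθs (θ t) (hθmem t)
      calc a t = ‖θstar - θ t‖ ^ 2 := rfl
        _ ≤ D ^ 2 := by nlinarith [norm_nonneg (θstar - θ t)]
    · intro t; positivity
    · intro t
      have : Real.sqrt (t:ℝ) ≤ Real.sqrt ((t:ℝ) + 1) := Real.sqrt_le_sqrt (by linarith)
      have h2 : ((t + 1 : ℕ) : ℝ) = (t : ℝ) + 1 := by push_cast; ring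
      rw [h2]
      exact mul_le_mul_of_nonneg_left this (by positivity)
    · exact hT
  -- second sum
  have hB : ∑ t ∈ Finset.Icc 1 T, D * L / (4 * Real.sqrt t) ≤ D * L / 4 * (2 * Real.sqrt T) := by
    have heq : ∀ t ∈ Finset.Icc 1 T, D * L / (4 * Real.sqrt t) = D * L / 4 * (1 / Real.sqrt t) := by
      intro t _; field_simp
    rw [Finset.sum_congr rfl heq, ← Finset.mul_sum]
    exact mul_le_mul_of_nonneg_left (sum_inv_sqrt_le T) (by positivity)
  have ha0 : 0 ≤ a (T + 1) := by positivity
  have hb0 : 0 ≤ L / D * Real.sqrt T := by positivity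
  have hDLs : 0 ≤ D * L * Real.sqrt T := by positivity
  have hAD : L / D * Real.sqrt T * D ^ 2 = D * L * Real.sqrt T := by
    field_simp
  nlinarith [mul_nonneg hb0 ha0]
end
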